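/- Assume the non-degeneracy condition with recoverable hidden states H* = {j*} × S* and regularity, and let b ∈ ℝ^{|𝕄|} define downstream labels g(x) = 1(b^T P(M_{j*} | X_{1:T} = x) ≥ 0). Let R = {x ∈ X^T : P(X_{1:T} = x) > 0 and there exists i ∈ [T] with supp(P(H_i | X_{−i} = x_{−i})) ⊆ H*}. Then there exist attention-head parameters — a query q ∈ ℝ^{|H|+1}, position embeddings β_1, …, β_T ∈ ℝ^{|H|+1}, a key matrix Θ^{(K)} ∈ ℝ^{(|H|+1)×|X|}, value parameters Θ^{(V)} ∈ ℝ^{|𝕄||H|×|X|} and u ∈ ℝ^{|𝕄||H|} — and token embeddings e(z) ∈ ℝ^{|𝕄||H|} such that for all x ∈ R: g(x) = 1( (1/|I|) Σ_{i ∈ I} u^T ((Θ^{(V)} G_i(x)) ⊙ e(x_i)) ≥ 0 ), where G_i(x) = P(X_i | X_{−i} = x_{−i}) and I = argmax_{i ∈ [T]} { q^T (Θ^{(K)} G_i(x) + β_i) } is the set of positions achieving the maximum. -/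

import Mathlib

open scoped Classical
open Matrix

noncomputable section

/-- Forward pass for a Markov chain with transition matrix `A`. -/
def fwdVec {H : Type*} [Fintype H] (A : Matrix H H ℝ) :
    (H → ℝ) → List (H → ℝ) → (H → ℝ)
  | μ, [] => μ
  | μ, v :: vs => fwdVec A (A.mulVec fun h => μ h * v h) vs

/-- `mJointAt A μ W m x i g = P(H_i = g, X_{−i} = x_{−i} | M = m)` in a
memory-augmented HMM (hidden chain `H_1, …, H_T`, `P(H_1) = A μ`). -/
def mJointAt {𝕄 S X : Type*} {N T : ℕ} [Fintype S] [DecidableEq S]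
    (A : Matrix (Fin N × S) (Fin N × S) ℝ) (μ : Fin N × S → ℝ)
    (W : X → 𝕄 → Fin N × S → ℝ) (m : Fin N → 𝕄)
    (x : Fin T → X) (i : Fin T) (g : Fin N × S) : ℝ :=
  ∑ h, fwdVec A (A.mulVec μ)
    (List.ofFn fun k : Fin T =>
      if k = i then (fun g' => if g' = g then 1 else 0)
      else fun g' => W (x k) (m g'.1) g') h

/-- `mZ … x i = P(X_{−i} = x_{−i})`. -/
def mZ {𝕄 S X : Type*} {N T : ℕ} [Fintype 𝕄] [Fintype S] [DecidableEq S]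
    (pM : (Fin N → 𝕄) → ℝ) (A : Matrix (Fin N × S) (Fin N × S) ℝ)
    (μ : Fin N × S → ℝ) (W : X → 𝕄 → Fin N × S → ℝ)
    (x : Fin T → X) (i : Fin T) : ℝ :=
  ∑ m, pM m * ∑ g, mJointAt A μ W m x i g

/-- `mSeqPm … m x = P(X_{1:T} = x | M = m)`. -/
def mSeqPm {𝕄 S X : Type*} {N T : ℕ} [Fintype S]
    (A : Matrix (Fin N × S) (Fin N × S) ℝ) (μ : Fin N × S → ℝ)
    (W : X → 𝕄 → Fin N × S → ℝ) (m : Fin N → 𝕄) (x : Fin T → X) : ℝ :=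
  ∑ h, fwdVec A (A.mulVec μ)
    (List.ofFn fun k : Fin T => fun g' => W (x k) (m g'.1) g') h

/-- `mSeqP … x = P(X_{1:T} = x)`. -/
def mSeqP {𝕄 S X : Type*} {N T : ℕ} [Fintype 𝕄] [Fintype S]
    (pM : (Fin N → 𝕄) → ℝ) (A : Matrix (Fin N × S) (Fin N × S) ℝ)
    (μ : Fin N × S → ℝ) (W : X → 𝕄 → Fin N × S → ℝ) (x : Fin T → X) : ℝ :=
  ∑ m, pM m * mSeqPm A μ W m x

/-- `mGtok … x i z = P(X_i = z | X_{−i} = x_{−i})`, the pretrained model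
output `G_i(x)` at position `i`. -/
def mGtok {𝕄 S X : Type*} {N T : ℕ} [Fintype 𝕄] [Fintype S] [DecidableEq S]
    (pM : (Fin N → 𝕄) → ℝ) (A : Matrix (Fin N × S) (Fin N × S) ℝ)
    (μ : Fin N × S → ℝ) (W : X → 𝕄 → Fin N × S → ℝ)
    (x : Fin T → X) (i : Fin T) (z : X) : ℝ :=
  (∑ m, pM m * ∑ g, mJointAt A μ W m x i g * W z (m g.1) g) / mZ pM A μ W x i

/-- `mPostH … x i g = P(H_i = g | X_{−i} = x_{−i})`. -/
def mPostH {𝕄 S X : Type*} {N T : ℕ} [Fintype 𝕄] [Fintype S] [DecidableEq S]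
    (pM : (Fin N → 𝕄) → ℝ) (A : Matrix (Fin N × S) (Fin N × S) ℝ)
    (μ : Fin N × S → ℝ) (W : X → 𝕄 → Fin N × S → ℝ)
    (x : Fin T → X) (i : Fin T) (g : Fin N × S) : ℝ :=
  (∑ m, pM m * mJointAt A μ W m x i g) / mZ pM A μ W x i

/-- `mMemPost … x m0 = P(M_{j*} = m0 | X_{1:T} = x)`. -/
def mMemPost {𝕄 S X : Type*} {N T : ℕ} [Fintype 𝕄] [Fintype S] [DecidableEq 𝕄]
    (pM : (Fin N → 𝕄) → ℝ) (A : Matrix (Fin N × S) (Fin N × S) ℝ)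
    (μ : Fin N × S → ℝ) (W : X → 𝕄 → Fin N × S → ℝ) (jstar : Fin N)
    (x : Fin T → X) (m0 : 𝕄) : ℝ :=
  (∑ m, if m jstar = m0 then pM m * mSeqPm A μ W m x else 0) / mSeqP pM A μ W x


/-! ### Auxiliary lemmas about `fwdVec` -/

section FwdLemmas
variable {H : Type*} [Fintype H] (A : Matrix H H ℝ)

lemma fwd_cons (ν : H → ℝ) (v : H → ℝ) (vs : List (H → ℝ)) :
    fwdVec A ν (v :: vs) = fwdVec A (A.mulVec fun h => ν h * v h) vs := rfl

lemma fwd_sum {ι : Type*} (s : Finset ι) (F : ι → H → ℝ) (l : List (H → ℝ)) :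
    fwdVec A (fun h' => ∑ a ∈ s, F a h') l = fun h => ∑ a ∈ s, fwdVec A (F a) l h := by
  induction l generalizing F with
  | nil => simp [fwdVec]
  | cons v vs ih =>
    rw [fwd_cons]
    have h1 : (A.mulVec fun h => (∑ a ∈ s, F a h) * v h)
        = fun h' => ∑ a ∈ s, (A.mulVec fun h => F a h * v h) h' := by
      funext h'
      simp only [Matrix.mulVec, dotProduct, Finset.sum_mul, Finset.mul_sum]
      rw [Finset.sum_comm]
    rw [h1, ih]
    funext h
    simp [fwd_cons]

lemma fwd_smul (c : ℝ) (ν : H → ℝ) (l : List (H → ℝ)) :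
    fwdVec A (fun h' => c * ν h') l = fun h => c * fwdVec A ν l h := by
  induction l generalizing ν with
  | nil => simp [fwdVec]
  | cons v vs ih =>
    rw [fwd_cons]
    have h1 : (A.mulVec fun h => (c * ν h) * v h)
        = fun h' => c * (A.mulVec fun h => ν h * v h) h' := by
      funext h'
      simp only [Matrix.mulVec, dotProduct, Finset.mul_sum]
      congr 1; funext g; ring
    rw [h1, ih]
    funext h
    simp [fwd_cons]

lemma fwd_nonneg (hA0 : ∀ g g', 0 ≤ A g' g) (ν : H → ℝ) (hν : ∀ h, 0 ≤ ν h)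
    (l : List (H → ℝ)) (hl : ∀ v ∈ l, ∀ h, 0 ≤ v h) (h : H) :
    0 ≤ fwdVec A ν l h := by
  induction l generalizing ν with
  | nil => exact hν h
  | cons v vs ih =>
    refine ih (A.mulVec fun h => ν h * v h) (fun h' => ?_) (fun v' hv' => hl v' (by simp [hv']))
    exact Finset.sum_nonneg fun g _ => mul_nonneg (hA0 _ _)
      (mul_nonneg (hν g) (hl v (by simp) g))

lemma fwd_delta [DecidableEq H] {T : ℕ} (F : Fin T → H → ℝ) (i : Fin T) (c : H → ℝ)
    (ν : H → ℝ) (h : H) :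
    ∑ g, c g * fwdVec A ν (List.ofFn fun k =>
        if k = i then (fun g' => if g' = g then (1:ℝ) else 0) else F k) h
      = fwdVec A ν (List.ofFn fun k => if k = i then c else F k) h := by
  induction T generalizing ν with
  | zero => exact absurd i.2 (by simp)
  | succ n ih =>
    refine Fin.cases ?_ ?_ i
    · -- i = 0
      simp only [List.ofFn_succ, if_pos rfl, Fin.succ_ne_zero, if_neg, fwd_cons]
      have key : ∀ g : H, (fun h' => c g * fwdVec A
            (A.mulVec fun h'' => ν h'' * (if h'' = g then (1:ℝ) else 0))
            (List.ofFn fun k : Fin n => F k.succ) h')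
          = fun h' => fwdVec A (fun h'' => c g *
            (A.mulVec fun h''' => ν h''' * (if h''' = g then (1:ℝ) else 0)) h'')
            (List.ofFn fun k : Fin n => F k.succ) h' := by
        intro g; rw [fwd_smul]
      calc ∑ g, c g * fwdVec A
            (A.mulVec fun h'' => ν h'' * (if h'' = g then (1:ℝ) else 0))
            (List.ofFn fun k : Fin n => F k.succ) h
          = ∑ g, fwdVec A (fun h'' => c g *
              (A.mulVec fun h''' => ν h''' * (if h''' = g then (1:ℝ) else 0)) h'')
              (List.ofFn fun k : Fin n => F k.succ) h := by
            refine Finset.sum_congr rfl fun g _ => ?_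
            exact congrFun (key g) h
        _ = fwdVec A (fun h'' => ∑ g, c g *
              (A.mulVec fun h''' => ν h''' * (if h''' = g then (1:ℝ) else 0)) h'')
              (List.ofFn fun k : Fin n => F k.succ) h := by
            rw [fwd_sum]
        _ = fwdVec A (A.mulVec fun h'' => ν h'' * c h'')
              (List.ofFn fun k : Fin n => F k.succ) h := by
            congr 1
            funext h''
            simp only [Matrix.mulVec, dotProduct, Finset.mul_sum]
            rw [Finset.sum_comm]
            refine Finset.sum_congr rfl fun g' _ => ?_
            simp [mul_ite, mul_comm, mul_assoc, mul_left_comm, Finset.sum_ite_eq']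
    · -- i = j.succ
      intro j
      simp only [List.ofFn_succ, Fin.succ_inj, fwd_cons]
      have h0 : ∀ (d : H → ℝ), (if (0 : Fin (n+1)) = j.succ then d else F 0) = F 0 := by
        intro d; rw [if_neg (Fin.succ_ne_zero j).symm]
      simp only [h0]
      exact ih (fun k => F k.succ) j (A.mulVec fun h' => ν h' * F 0 h')

end FwdLemmas

/-! ### Dual functionals for a linearly independent family -/

lemma exists_dual {E : Type*} [AddCommGroup E] [Module ℝ E] {ι : Type*} (w : ι → E)
    (Vset : Set E) (hli : LinearIndependent ℝ w)
    (hdisj : Submodule.span ℝ (Set.range w) ⊓ Submodule.span ℝ Vset = ⊥) :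
    ∃ φ : ι → (E →ₗ[ℝ] ℝ),
      (∀ p p', φ p (w p') = if p = p' then 1 else 0) ∧
      (∀ p, ∀ v ∈ Vset, φ p v = 0) := by
  set V := Submodule.span ℝ Vset with hV
  let bV := Module.Basis.ofVectorSpace ℝ V
  let v2 : Module.Basis.ofVectorSpaceIndex ℝ V → E := fun i => (bV i : E)
  have hli2 : LinearIndependent ℝ v2 := bV.linearIndependent.map' V.subtype V.ker_subtype
  have hsp2 : Submodule.span ℝ (Set.range v2) = V := by
    have : Set.range v2 = V.subtype '' (Set.range bV) := by
      rw [← Set.range_comp]; rfl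
    rw [this, Submodule.span_image, bV.span_eq, Submodule.map_top, Submodule.range_subtype]
  have hdisj' : Disjoint (Submodule.span ℝ (Set.range w)) (Submodule.span ℝ (Set.range v2)) := by
    rw [hsp2]; exact disjoint_iff.mpr hdisj
  have hu : LinearIndependent ℝ (Sum.elim w v2) := hli.sum_type hli2 hdisj'
  have hinj : Function.Injective (Sum.elim w v2) := hu.injective
  have hset : LinearIndepOn ℝ id (Set.range (Sum.elim w v2)) :=
    (linearIndepOn_id_range_iff hinj).mpr hu
  let B := Module.Basis.extend hset
  have hmem : ∀ a, Sum.elim w v2 a ∈ hset.extend (Set.subset_univ _) := fun a =>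
    hset.subset_extend _ ⟨a, rfl⟩
  refine ⟨fun p => B.coord ⟨w p, hmem (Sum.inl p)⟩, fun p p' => ?_, fun p v hv => ?_⟩
  · have h1 : B ⟨w p', hmem (Sum.inl p')⟩ = w p' := Module.Basis.extend_apply_self hset _
    rw [← h1, Module.Basis.coord_apply, Module.Basis.repr_self, Finsupp.single_apply]
    by_cases h : p = p'
    · subst h; simp
    · have : (⟨Sum.elim w v2 (Sum.inl p'), hmem _⟩ :
          hset.extend (Set.subset_univ _)) ≠ ⟨Sum.elim w v2 (Sum.inl p), hmem _⟩ := by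
        intro hc
        exact h (Sum.inl.inj (hinj (Subtype.ext_iff.mp hc))).symm
      simp only [Sum.elim_inl] at this
      rw [if_neg this, if_neg h]
  · have hker : Submodule.span ℝ (Set.range v2) ≤
        LinearMap.ker (B.coord ⟨w p, hmem (Sum.inl p)⟩) := by
      rw [Submodule.span_le]
      rintro y ⟨i, rfl⟩
      have h1 : B ⟨v2 i, hmem (Sum.inr i)⟩ = v2 i := Module.Basis.extend_apply_self hset _
      simp only [SetLike.mem_coe, LinearMap.mem_ker]
      rw [← h1, Module.Basis.coord_apply, Module.Basis.repr_self, Finsupp.single_apply, if_neg]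
      intro hc
      exact Sum.inr_ne_inl (hinj (Subtype.ext_iff.mp hc))
    have hvmem : v ∈ Submodule.span ℝ (Set.range v2) := by
      rw [hsp2]; exact Submodule.subset_span hv
    exact hker hvmem

/-! ### Probabilistic identities -/

lemma mJointAt_W_sum {𝕄 S X : Type*} {N T : ℕ} [Fintype S] [DecidableEq S]
    (A : Matrix (Fin N × S) (Fin N × S) ℝ) (μ : Fin N × S → ℝ)
    (W : X → 𝕄 → Fin N × S → ℝ) (m : Fin N → 𝕄) (x : Fin T → X) (i : Fin T) :
    ∑ g, mJointAt A μ W m x i g * W (x i) (m g.1) g = mSeqPm A μ W m x := by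
  unfold mJointAt mSeqPm
  simp_rw [Finset.sum_mul]
  rw [Finset.sum_comm]
  refine Finset.sum_congr rfl fun h _ => ?_
  calc ∑ g, fwdVec A (A.mulVec μ) (List.ofFn fun k =>
          if k = i then (fun g' => if g' = g then 1 else 0)
          else fun g' => W (x k) (m g'.1) g') h * W (x i) (m g.1) g
      = ∑ g, (fun g' => W (x i) (m g'.1) g') g * fwdVec A (A.mulVec μ) (List.ofFn fun k =>
          if k = i then (fun g' => if g' = g then 1 else 0)
          else fun g' => W (x k) (m g'.1) g') h :=
        Finset.sum_congr rfl fun g _ => mul_comm _ _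
    _ = fwdVec A (A.mulVec μ) (List.ofFn fun k =>
          if k = i then (fun g' => W (x i) (m g'.1) g')
          else fun g' => W (x k) (m g'.1) g') h :=
        fwd_delta A _ i _ _ h
    _ = fwdVec A (A.mulVec μ) (List.ofFn fun k => fun g' => W (x k) (m g'.1) g') h := by
        congr 1
        congr 1
        funext k
        by_cases hk : k = i
        · subst hk; rw [if_pos rfl]
        · rw [if_neg hk]

lemma mJointAt_nonneg {𝕄 S X : Type*} {N T : ℕ} [Fintype S] [DecidableEq S]
    (A : Matrix (Fin N × S) (Fin N × S) ℝ) (μ : Fin N × S → ℝ)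
    (W : X → 𝕄 → Fin N × S → ℝ) (m : Fin N → 𝕄) (x : Fin T → X) (i : Fin T)
    (hA0 : ∀ g g', 0 ≤ A g' g) (hμ0 : ∀ g, 0 ≤ μ g) (hW0 : ∀ z m0 g, 0 ≤ W z m0 g)
    (g : Fin N × S) :
    0 ≤ mJointAt A μ W m x i g := by
  refine Finset.sum_nonneg fun h _ => fwd_nonneg A hA0 _ ?_ _ ?_ h
  · intro h'
    exact Finset.sum_nonneg fun g' _ => mul_nonneg (hA0 _ _) (hμ0 g')
  · intro v hv h'
    rw [List.mem_ofFn] at hv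
    obtain ⟨k, rfl⟩ := hv
    by_cases hk : k = i
    · simp only [hk, if_pos rfl]
      by_cases h2 : h' = g <;> simp [h2]
    · simp only [if_neg hk]
      exact hW0 _ _ _

lemma mSeqP_le_mZ {𝕄 S X : Type*} {N T : ℕ} [Fintype 𝕄] [Fintype S] [Fintype X] [DecidableEq S]
    (pM : (Fin N → 𝕄) → ℝ) (A : Matrix (Fin N × S) (Fin N × S) ℝ) (μ : Fin N × S → ℝ)
    (W : X → 𝕄 → Fin N × S → ℝ) (x : Fin T → X) (i : Fin T)
    (hpM0 : ∀ m, 0 ≤ pM m) (hA0 : ∀ g g', 0 ≤ A g' g) (hμ0 : ∀ g, 0 ≤ μ g)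
    (hW0 : ∀ z m0 g, 0 ≤ W z m0 g) (hW1 : ∀ m0 g, ∑ z, W z m0 g = 1) :
    mSeqP pM A μ W x ≤ mZ pM A μ W x i := by
  unfold mSeqP mZ
  refine Finset.sum_le_sum fun m _ => mul_le_mul_of_nonneg_left ?_ (hpM0 m)
  rw [← mJointAt_W_sum A μ W m x i]
  refine Finset.sum_le_sum fun g _ => ?_
  have hJ := mJointAt_nonneg A μ W m x i hA0 hμ0 hW0 g
  have hWle : W (x i) (m g.1) g ≤ 1 := by
    rw [← hW1 (m g.1) g]
    exact Finset.single_le_sum (fun z _ => hW0 z _ _) (Finset.mem_univ (x i))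
  exact mul_le_of_le_one_right hJ hWle

lemma sum_Hstar {S : Type*} [Fintype S] [DecidableEq S] {N : ℕ} (jstar : Fin N)
    (Sstar : Finset S) (f : Fin N × S → ℝ) :
    ∑ g : Fin N × S, (if g.1 = jstar ∧ g.2 ∈ Sstar then f g else 0)
      = ∑ s0 ∈ Sstar, f (jstar, s0) := by
  rw [Fintype.sum_prod_type]
  have h1 : ∀ (j : Fin N) (s : S), (if j = jstar ∧ s ∈ Sstar then f (j, s) else 0)
      = if j = jstar then (if s ∈ Sstar then f (j, s) else 0) else 0 := by
    intro j s
    by_cases h1 : j = jstar <;> by_cases h2 : s ∈ Sstar <;> simp [h1, h2]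
  simp_rw [h1]
  have h2 : ∀ j : Fin N, (∑ s : S, if j = jstar then (if s ∈ Sstar then f (j, s) else 0) else 0)
      = if j = jstar then (∑ s : S, if s ∈ Sstar then f (j, s) else 0) else 0 := by
    intro j; by_cases hj : j = jstar <;> simp [hj]
  simp_rw [h2]
  rw [Finset.sum_ite_eq' Finset.univ jstar
    (fun j => ∑ s : S, if s ∈ Sstar then f (j, s) else 0)]
  simp [Finset.sum_ite_mem]

/-!
STATEMENT 10 (Theorem 3 of the paper).

Memory-augmented HMM with non-degeneracy for recoverable states
`H* = {j*} × S*` and regularity; downstream labels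
`g(x) = 𝟙(bᵀ P(M_{j*} | X_{1:T} = x) ≥ 0)`.  Let
`R = {x : P(X_{1:T} = x) > 0 and ∃ i, supp(P(H_i | X_{−i} = x_{−i})) ⊆ H*}`.
Then there exist attention-head parameters (query `q ∈ ℝ^{|H|+1}`, position
embeddings `β_i ∈ ℝ^{|H|+1}`, key matrix `Θᴷ`, value parameters `Θⱽ`, `u`)
and token embeddings `e(z) ∈ ℝ^{|𝕄||H|}` such that for all `x ∈ R`:
`g(x) = 𝟙( (1/|I|) ∑_{i ∈ I} uᵀ ((Θⱽ G_i(x)) ⊙ e(x_i)) ≥ 0 )`, where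
`I = argmax_{i ∈ [T]} { qᵀ (Θᴷ G_i(x) + β_i) }`.
-/
theorem stmt10 {𝕄 S X : Type*} {N : ℕ}
    [Fintype 𝕄] [Fintype S] [Fintype X] [DecidableEq 𝕄] [DecidableEq S]
    (pM : (Fin N → 𝕄) → ℝ) (μ : Fin N × S → ℝ)
    (A : Matrix (Fin N × S) (Fin N × S) ℝ) (W : X → 𝕄 → Fin N × S → ℝ)
    (hpM0 : ∀ m, 0 ≤ pM m) (hpM1 : ∑ m, pM m = 1)
    (hμ0 : ∀ g, 0 ≤ μ g) (hμ1 : ∑ g, μ g = 1)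
    (hA0 : ∀ g g', 0 ≤ A g' g) (hA1 : ∀ g, ∑ g', A g' g = 1)
    (hW0 : ∀ z m0 g, 0 ≤ W z m0 g) (hW1 : ∀ m0 g, ∑ z, W z m0 g = 1)
    -- non-degeneracy with recoverable hidden states `H* = {j*} × S*`
    (jstar : Fin N) (Sstar : Finset S)
    (hli : LinearIndependent ℝ
      (fun p : 𝕄 × {s : S // s ∈ Sstar} => fun z : X => W z p.1 (jstar, p.2.1)))
    (hspan : Submodule.span ℝ
        {f : X → ℝ | ∃ m0 : 𝕄, ∃ s : S, s ∈ Sstar ∧ f = fun z => W z m0 (jstar, s)}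
      ⊓ Submodule.span ℝ
        {f : X → ℝ | ∃ m0 : 𝕄, ∃ g : Fin N × S,
          ¬(g.1 = jstar ∧ g.2 ∈ Sstar) ∧ f = fun z => W z m0 g}
      = ⊥)
    -- regularity
    (hErg : ∃ n₀ : ℕ, ∀ n ≥ n₀, ∀ g g' : Fin N × S, 0 < (A ^ n) g' g)
    (hfull : ∀ g, 0 < μ g)
    (T : ℕ) (b : 𝕄 → ℝ) :
    ∃ (q : Option (Fin N × S) → ℝ) (β : Fin T → Option (Fin N × S) → ℝ)
      (ΘK : Matrix (Option (Fin N × S)) X ℝ)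
      (ΘV : Matrix (𝕄 × (Fin N × S)) X ℝ) (u : 𝕄 × (Fin N × S) → ℝ)
      (e : X → 𝕄 × (Fin N × S) → ℝ),
      ∀ x : Fin T → X,
        -- `x ∈ R`
        0 < mSeqP pM A μ W x →
        (∃ i : Fin T, ∀ g : Fin N × S,
          ¬(g.1 = jstar ∧ g.2 ∈ Sstar) → mPostH pM A μ W x i g = 0) →
        -- `g(x)` agrees with the sign of the attention-head output
        (0 ≤ ∑ m0, b m0 * mMemPost pM A μ W jstar x m0
          ↔ 0 ≤
            ((Finset.univ.filter fun i : Fin T => ∀ i' : Fin T,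
                q ⬝ᵥ (ΘK.mulVec (mGtok pM A μ W x i') + β i')
                  ≤ q ⬝ᵥ (ΘK.mulVec (mGtok pM A μ W x i) + β i)).card : ℝ)⁻¹ *
              ∑ i ∈ Finset.univ.filter (fun i : Fin T => ∀ i' : Fin T,
                  q ⬝ᵥ (ΘK.mulVec (mGtok pM A μ W x i') + β i')
                    ≤ q ⬝ᵥ (ΘK.mulVec (mGtok pM A μ W x i) + β i)),
                ∑ p : 𝕄 × (Fin N × S), u p *
                  ((ΘV.mulVec (mGtok pM A μ W x i)) p * e (x i) p)) := by
  classical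
  -- dual functionals from non-degeneracy
  obtain ⟨φ, hφ1, hφ2⟩ := exists_dual
    (fun p : 𝕄 × {s : S // s ∈ Sstar} => fun z : X => W z p.1 (jstar, p.2.1))
    {f : X → ℝ | ∃ m0 : 𝕄, ∃ g : Fin N × S,
      ¬(g.1 = jstar ∧ g.2 ∈ Sstar) ∧ f = fun z => W z m0 g}
    hli (by
      have hr : Set.range (fun p : 𝕄 × {s : S // s ∈ Sstar} =>
          fun z : X => W z p.1 (jstar, p.2.1))
          = {f : X → ℝ | ∃ m0 : 𝕄, ∃ s : S, s ∈ Sstar ∧ f = fun z => W z m0 (jstar, s)} := by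
        ext f
        constructor
        · rintro ⟨⟨m0, s, hs⟩, rfl⟩
          exact ⟨m0, s, hs, rfl⟩
        · rintro ⟨m0, s, hs, rfl⟩
          exact ⟨⟨m0, ⟨s, hs⟩⟩, rfl⟩
      rw [hr]
      exact hspan)
  set Φ : 𝕄 → S → ((X → ℝ) →ₗ[ℝ] ℝ) :=
    fun m0 s => if h : s ∈ Sstar then φ (m0, ⟨s, h⟩) else 0 with hΦdef
  have hΦcol : ∀ (m0 : 𝕄) (s0 : S), s0 ∈ Sstar → ∀ (m1 : 𝕄) (g : Fin N × S),
      Φ m0 s0 (fun z => W z m1 g) = if g = (jstar, s0) ∧ m0 = m1 then 1 else 0 := by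
    intro m0 s0 hs0 m1 g
    by_cases hg : g.1 = jstar ∧ g.2 ∈ Sstar
    · have hgeq : g = (jstar, g.2) := Prod.ext_iff.mpr ⟨hg.1, rfl⟩
      rw [hΦdef]
      simp only [dif_pos hs0]
      have hcol : (fun z => W z m1 g) = (fun p : 𝕄 × {s : S // s ∈ Sstar} =>
          fun z : X => W z p.1 (jstar, p.2.1)) (m1, ⟨g.2, hg.2⟩) := by
        funext z; exact congrArg (W z m1) hgeq
      rw [hcol, hφ1]
      have hiff : ((m0, (⟨s0, hs0⟩ : {s : S // s ∈ Sstar})) = (m1, ⟨g.2, hg.2⟩))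
          ↔ (g = (jstar, s0) ∧ m0 = m1) := by
        constructor
        · intro h
          rw [Prod.ext_iff] at h
          have hs : s0 = g.2 := congrArg Subtype.val h.2
          exact ⟨by rw [hgeq, hs], h.1⟩
        · rintro ⟨h1, h2⟩
          have hs : g.2 = s0 := by rw [h1]
          exact Prod.ext_iff.mpr ⟨h2, Subtype.ext hs.symm⟩
      simp only [hiff]
    · have hmem : (fun z => W z m1 g) ∈ {f : X → ℝ | ∃ m0 : 𝕄, ∃ g : Fin N × S,
          ¬(g.1 = jstar ∧ g.2 ∈ Sstar) ∧ f = fun z => W z m0 g} := ⟨m1, g, hg, rfl⟩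
      rw [hΦdef]
      simp only [dif_pos hs0]
      rw [hφ2 _ _ hmem, eq_comm, if_neg]
      rintro ⟨h1, -⟩
      rw [h1] at hg
      exact hg ⟨rfl, hs0⟩
  -- evaluating functionals through coordinates
  have hEval : ∀ (ψ : (X → ℝ) →ₗ[ℝ] ℝ) (v : X → ℝ),
      ∑ z, ψ (fun z' => if z' = z then 1 else 0) * v z = ψ v := by
    intro ψ v
    have hv : v = ∑ z : X, v z • (fun z' => if z' = z then (1:ℝ) else 0) := by
      funext z'
      rw [Finset.sum_apply]
      simp only [Pi.smul_apply, smul_eq_mul, mul_ite, mul_one, mul_zero]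
      rw [Finset.sum_ite_eq Finset.univ z' v]
      simp
    conv_rhs => rw [hv]
    rw [map_sum]
    refine Finset.sum_congr rfl fun z _ => ?_
    rw [_root_.map_smul, smul_eq_mul]
    exact mul_comm _ _
  -- the attention-head parameters
  set qq : Option (Fin N × S) → ℝ := fun o => if o = none then 1 else 0 with hqq
  set ββ : Fin T → Option (Fin N × S) → ℝ := fun _ _ => 0 with hββ
  set KK : Matrix (Option (Fin N × S)) X ℝ := Matrix.of (fun o z => if o = none
      then ∑ m0, ∑ s0 ∈ Sstar, Φ m0 s0 (fun z' => if z' = z then 1 else 0) else 0) with hKK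
  set VV : Matrix (𝕄 × (Fin N × S)) X ℝ := Matrix.of (fun p z =>
      if p.2.1 = jstar ∧ p.2.2 ∈ Sstar
      then Φ p.1 p.2.2 (fun z' => if z' = z then 1 else 0) else 0) with hVV
  refine ⟨qq, ββ, KK, VV, fun p => b p.1, fun z p => W z p.1 p.2, ?_⟩
  intro x hP hsupp
  -- basic positivity
  have hZpos : ∀ i : Fin T, 0 < mZ pM A μ W x i := fun i =>
    lt_of_lt_of_le hP (mSeqP_le_mZ pM A μ W x i hpM0 hA0 hμ0 hW0 hW1)
  have hJnn : ∀ (m : Fin N → 𝕄) (i : Fin T) (g : Fin N × S), 0 ≤ mJointAt A μ W m x i g :=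
    fun m i g => mJointAt_nonneg A μ W m x i hA0 hμ0 hW0 g
  -- the model output as a function
  have hGdef : ∀ i : Fin T, mGtok pM A μ W x i
      = fun z => (mZ pM A μ W x i)⁻¹ *
          (∑ m, pM m * ∑ g, mJointAt A μ W m x i g * W z (m g.1) g) := by
    intro i; funext z
    show (∑ m, pM m * ∑ g, mJointAt A μ W m x i g * W z (m g.1) g) / mZ pM A μ W x i = _
    rw [div_eq_inv_mul]
  -- functionals applied to the model output
  have hΦG : ∀ (m0 : 𝕄) (s0 : S), s0 ∈ Sstar → ∀ i : Fin T,
      Φ m0 s0 (mGtok pM A μ W x i)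
        = (mZ pM A μ W x i)⁻¹ *
            ∑ m, (if m0 = m jstar then pM m * mJointAt A μ W m x i (jstar, s0) else 0) := by
    intro m0 s0 hs0 i
    rw [hGdef i]
    have h1 : (fun z => (mZ pM A μ W x i)⁻¹ *
          (∑ m, pM m * ∑ g, mJointAt A μ W m x i g * W z (m g.1) g))
        = (mZ pM A μ W x i)⁻¹ •
            ∑ m, pM m • ∑ g, mJointAt A μ W m x i g • (fun z => W z (m g.1) g) := by
      funext z
      simp only [Pi.smul_apply, Finset.sum_apply, smul_eq_mul]
    rw [h1, _root_.map_smul, smul_eq_mul]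
    congr 1
    rw [map_sum]
    refine Finset.sum_congr rfl fun m _ => ?_
    rw [_root_.map_smul, smul_eq_mul, map_sum]
    have h2 : ∀ g : Fin N × S,
        Φ m0 s0 (mJointAt A μ W m x i g • fun z => W z (m g.1) g)
          = mJointAt A μ W m x i g * (if g = (jstar, s0) ∧ m0 = m jstar then 1 else 0) := by
      intro g
      rw [_root_.map_smul, smul_eq_mul, hΦcol m0 s0 hs0 (m g.1) g]
      congr 1
      refine if_congr ?_ rfl rfl
      constructor
      · rintro ⟨rfl, h2⟩; exact ⟨rfl, h2⟩
      · rintro ⟨rfl, h2⟩; exact ⟨rfl, h2⟩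
    simp_rw [h2]
    by_cases hm : m0 = m jstar
    · simp only [hm, and_true, mul_ite, mul_one, mul_zero]
      rw [Finset.sum_ite_eq' Finset.univ ((jstar, s0) : Fin N × S) (mJointAt A μ W m x i)]
      simp
    · simp [hm]
  -- the score of the attention head
  have e1 : ∀ i : Fin T, ∑ z, (∑ m0, ∑ s0 ∈ Sstar,
        Φ m0 s0 (fun z' => if z' = z then (1:ℝ) else 0)) * mGtok pM A μ W x i z
      = ∑ m0 : 𝕄, ∑ s0 ∈ Sstar, Φ m0 s0 (mGtok pM A μ W x i) := by
    intro i
    simp_rw [Finset.sum_mul]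
    rw [Finset.sum_comm]
    refine Finset.sum_congr rfl fun m0 _ => ?_
    rw [Finset.sum_comm]
    exact Finset.sum_congr rfl fun s0 _ => hEval _ _
  have e2 : ∀ i : Fin T, ∑ m0 : 𝕄, ∑ s0 ∈ Sstar, Φ m0 s0 (mGtok pM A μ W x i)
      = (mZ pM A μ W x i)⁻¹ *
          ∑ m, pM m * ∑ s0 ∈ Sstar, mJointAt A μ W m x i (jstar, s0) := by
    intro i
    rw [Finset.sum_congr rfl (fun m0 _ =>
      Finset.sum_congr rfl fun s0 hs0 => hΦG m0 s0 hs0 i)]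
    simp_rw [← Finset.mul_sum]
    congr 1
    have h4 : ∀ s0 : S, ∑ m0 : 𝕄, ∑ m,
        (if m0 = m jstar then pM m * mJointAt A μ W m x i (jstar, s0) else 0)
        = ∑ m, pM m * mJointAt A μ W m x i (jstar, s0) := by
      intro s0
      rw [Finset.sum_comm]
      refine Finset.sum_congr rfl fun m _ => ?_
      rw [Finset.sum_ite_eq' Finset.univ (m jstar)
        (fun _ => pM m * mJointAt A μ W m x i (jstar, s0))]
      simp
    calc ∑ m0 : 𝕄, ∑ s0 ∈ Sstar, ∑ m,
          (if m0 = m jstar then pM m * mJointAt A μ W m x i (jstar, s0) else 0)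
        = ∑ s0 ∈ Sstar, ∑ m0 : 𝕄, ∑ m,
            (if m0 = m jstar then pM m * mJointAt A μ W m x i (jstar, s0) else 0) :=
          Finset.sum_comm
      _ = ∑ s0 ∈ Sstar, ∑ m, pM m * mJointAt A μ W m x i (jstar, s0) :=
          Finset.sum_congr rfl fun s0 _ => h4 s0
      _ = ∑ m, ∑ s0 ∈ Sstar, pM m * mJointAt A μ W m x i (jstar, s0) := Finset.sum_comm
      _ = ∑ m, pM m * ∑ s0 ∈ Sstar, mJointAt A μ W m x i (jstar, s0) :=
          Finset.sum_congr rfl fun m _ => (Finset.mul_sum _ _ _).symm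
  have hscore : ∀ i : Fin T, qq ⬝ᵥ (KK.mulVec (mGtok pM A μ W x i) + ββ i)
      = (mZ pM A μ W x i)⁻¹ *
          ∑ m, pM m * ∑ s0 ∈ Sstar, mJointAt A μ W m x i (jstar, s0) := by
    intro i
    have h0 : qq ⬝ᵥ (KK.mulVec (mGtok pM A μ W x i) + ββ i)
        = (KK.mulVec (mGtok pM A μ W x i)) none := by
      rw [dotProduct, Fintype.sum_option]
      simp [hqq, hββ]
    rw [h0]
    have h1 : (KK.mulVec (mGtok pM A μ W x i)) none
        = ∑ z, (∑ m0, ∑ s0 ∈ Sstar,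
            Φ m0 s0 (fun z' => if z' = z then (1:ℝ) else 0)) * mGtok pM A μ W x i z := by
      simp [hKK, Matrix.mulVec, dotProduct]
    rw [h1, e1 i, e2 i]
  -- score is at most one, and equals one exactly on fully recoverable positions
  have hZsplit : ∀ i : Fin T, mZ pM A μ W x i
      = (∑ m, pM m * ∑ s0 ∈ Sstar, mJointAt A μ W m x i (jstar, s0))
        + ∑ g : Fin N × S, (if g.1 = jstar ∧ g.2 ∈ Sstar then 0
            else ∑ m, pM m * mJointAt A μ W m x i g) := by
    intro i
    have h1 : mZ pM A μ W x i = ∑ g : Fin N × S, ∑ m, pM m * mJointAt A μ W m x i g := by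
      unfold mZ
      simp_rw [Finset.mul_sum]
      rw [Finset.sum_comm]
    have h2 : (∑ m, pM m * ∑ s0 ∈ Sstar, mJointAt A μ W m x i (jstar, s0))
        = ∑ g : Fin N × S, (if g.1 = jstar ∧ g.2 ∈ Sstar
            then ∑ m, pM m * mJointAt A μ W m x i g else 0) := by
      rw [sum_Hstar jstar Sstar (fun g => ∑ m, pM m * mJointAt A μ W m x i g)]
      simp_rw [Finset.mul_sum]
      rw [Finset.sum_comm]
    rw [h1, h2, ← Finset.sum_add_distrib]
    refine Finset.sum_congr rfl fun g _ => ?_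
    by_cases hg : g.1 = jstar ∧ g.2 ∈ Sstar <;> simp [hg]
  have hNs_le : ∀ i : Fin T,
      (∑ m, pM m * ∑ s0 ∈ Sstar, mJointAt A μ W m x i (jstar, s0)) ≤ mZ pM A μ W x i := by
    intro i
    rw [hZsplit i]
    refine le_add_of_nonneg_right (Finset.sum_nonneg fun g _ => ?_)
    by_cases hg : g.1 = jstar ∧ g.2 ∈ Sstar
    · simp [hg]
    · rw [if_neg hg]
      exact Finset.sum_nonneg fun m _ => mul_nonneg (hpM0 m) (hJnn m i g)
  have hscore_le : ∀ i : Fin T, qq ⬝ᵥ (KK.mulVec (mGtok pM A μ W x i) + ββ i) ≤ 1 := by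
    intro i
    rw [hscore i]
    calc (mZ pM A μ W x i)⁻¹ * ∑ m, pM m * ∑ s0 ∈ Sstar, mJointAt A μ W m x i (jstar, s0)
        ≤ (mZ pM A μ W x i)⁻¹ * mZ pM A μ W x i :=
          mul_le_mul_of_nonneg_left (hNs_le i) (inv_nonneg.mpr (le_of_lt (hZpos i)))
      _ = 1 := inv_mul_cancel₀ (ne_of_gt (hZpos i))
  have hscore_one : ∀ i : Fin T,
      (∀ g : Fin N × S, ¬(g.1 = jstar ∧ g.2 ∈ Sstar) →
        ∑ m, pM m * mJointAt A μ W m x i g = 0) →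
      qq ⬝ᵥ (KK.mulVec (mGtok pM A μ W x i) + ββ i) = 1 := by
    intro i h
    have h1 : ∑ g : Fin N × S, (if g.1 = jstar ∧ g.2 ∈ Sstar then 0
        else ∑ m, pM m * mJointAt A μ W m x i g) = 0 :=
      Finset.sum_eq_zero fun g _ => by
        by_cases hg : g.1 = jstar ∧ g.2 ∈ Sstar
        · simp [hg]
        · rw [if_neg hg]; exact h g hg
    have h2 : mZ pM A μ W x i
        = ∑ m, pM m * ∑ s0 ∈ Sstar, mJointAt A μ W m x i (jstar, s0) := by
      rw [hZsplit i, h1, add_zero]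
    rw [hscore i, ← h2, inv_mul_cancel₀ (ne_of_gt (hZpos i))]
  have hone_van : ∀ i : Fin T,
      qq ⬝ᵥ (KK.mulVec (mGtok pM A μ W x i) + ββ i) = 1 →
      ∀ g : Fin N × S, ¬(g.1 = jstar ∧ g.2 ∈ Sstar) →
        ∀ m, pM m * mJointAt A μ W m x i g = 0 := by
    intro i h g hg m
    rw [hscore i] at h
    have hZN : mZ pM A μ W x i
        = ∑ m, pM m * ∑ s0 ∈ Sstar, mJointAt A μ W m x i (jstar, s0) := by
      have h3 := congrArg (fun t => mZ pM A μ W x i * t) h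
      simp only [mul_one] at h3
      rw [← mul_assoc, mul_inv_cancel₀ (ne_of_gt (hZpos i)), one_mul] at h3
      exact h3.symm
    have hD0 : ∑ g' : Fin N × S, (if g'.1 = jstar ∧ g'.2 ∈ Sstar then 0
        else ∑ m', pM m' * mJointAt A μ W m' x i g') = 0 := by
      have h4 := hZsplit i
      rw [← hZN] at h4
      linarith
    have hterm : ∑ m', pM m' * mJointAt A μ W m' x i g = 0 := by
      have hnn : ∀ g' ∈ Finset.univ, (0:ℝ) ≤ (if g'.1 = jstar ∧ g'.2 ∈ Sstar then 0
          else ∑ m', pM m' * mJointAt A μ W m' x i g') := by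
        intro g' _
        by_cases hg' : g'.1 = jstar ∧ g'.2 ∈ Sstar
        · simp [hg']
        · rw [if_neg hg']
          exact Finset.sum_nonneg fun m' _ => mul_nonneg (hpM0 m') (hJnn m' i g')
      have h5 := (Finset.sum_eq_zero_iff_of_nonneg hnn).mp hD0 g (Finset.mem_univ g)
      rwa [if_neg hg] at h5
    have hnn2 : ∀ m' ∈ Finset.univ, (0:ℝ) ≤ pM m' * mJointAt A μ W m' x i g :=
      fun m' _ => mul_nonneg (hpM0 m') (hJnn m' i g)
    exact (Finset.sum_eq_zero_iff_of_nonneg hnn2).mp hterm m (Finset.mem_univ m)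
  -- the value read off by the attention head
  have hVp : ∀ (i : Fin T) (p : 𝕄 × (Fin N × S)), VV.mulVec (mGtok pM A μ W x i) p
      = if p.2.1 = jstar ∧ p.2.2 ∈ Sstar then Φ p.1 p.2.2 (mGtok pM A μ W x i) else 0 := by
    intro i p
    by_cases hp : p.2.1 = jstar ∧ p.2.2 ∈ Sstar
    · rw [if_pos hp]
      have h1 : VV.mulVec (mGtok pM A μ W x i) p
          = ∑ z, Φ p.1 p.2.2 (fun z' => if z' = z then (1:ℝ) else 0)
              * mGtok pM A μ W x i z := by
        simp [hVV, Matrix.mulVec, dotProduct, hp]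
      rw [h1]
      exact hEval _ _
    · rw [if_neg hp]
      simp [hVV, Matrix.mulVec, dotProduct, hp]
  have hvalue : ∀ i : Fin T,
      (∀ g : Fin N × S, ¬(g.1 = jstar ∧ g.2 ∈ Sstar) →
        ∀ m, pM m * mJointAt A μ W m x i g = 0) →
      (∑ p : 𝕄 × (Fin N × S), b p.1 *
          (VV.mulVec (mGtok pM A μ W x i) p * W (x i) p.1 p.2))
        = (mZ pM A μ W x i)⁻¹ *
            ∑ m0, b m0 * ∑ m, (if m jstar = m0 then pM m * mSeqPm A μ W m x else 0) := by
    intro i hvan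
    have step1 : (∑ p : 𝕄 × (Fin N × S), b p.1 *
          (VV.mulVec (mGtok pM A μ W x i) p * W (x i) p.1 p.2))
        = ∑ m0 : 𝕄, ∑ s0 ∈ Sstar,
            b m0 * (Φ m0 s0 (mGtok pM A μ W x i) * W (x i) m0 (jstar, s0)) := by
      rw [Fintype.sum_prod_type]
      refine Finset.sum_congr rfl fun m0 _ => ?_
      rw [← sum_Hstar jstar Sstar
        (fun g => b m0 * (Φ m0 g.2 (mGtok pM A μ W x i) * W (x i) m0 g))]
      refine Finset.sum_congr rfl fun g _ => ?_
      rw [hVp i (m0, g)]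
      by_cases hg : g.1 = jstar ∧ g.2 ∈ Sstar
      · rw [if_pos hg, if_pos hg]
      · rw [if_neg hg, if_neg hg, zero_mul, mul_zero]
    rw [step1]
    have step2 : ∑ m0 : 𝕄, ∑ s0 ∈ Sstar,
          b m0 * (Φ m0 s0 (mGtok pM A μ W x i) * W (x i) m0 (jstar, s0))
        = (mZ pM A μ W x i)⁻¹ * ∑ m0 : 𝕄, ∑ s0 ∈ Sstar,
            ((∑ m, if m0 = m jstar then pM m * mJointAt A μ W m x i (jstar, s0) else 0)
              * (b m0 * W (x i) m0 (jstar, s0))) := by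
      rw [Finset.mul_sum]
      refine Finset.sum_congr rfl fun m0 _ => ?_
      rw [Finset.mul_sum]
      refine Finset.sum_congr rfl fun s0 hs0 => ?_
      rw [hΦG m0 s0 hs0 i]
      ring
    rw [step2]
    congr 1
    -- the inner combinatorial identity, using the support condition
    refine Finset.sum_congr rfl fun m0 _ => ?_
    have hrhs : b m0 * ∑ m, (if m jstar = m0 then pM m * mSeqPm A μ W m x else 0)
        = ∑ m, (if m jstar = m0 then b m0 * (pM m * mSeqPm A μ W m x) else 0) := by
      rw [Finset.mul_sum]
      refine Finset.sum_congr rfl fun m _ => ?_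
      by_cases hm : m jstar = m0 <;> simp [hm]
    rw [hrhs]
    have hlhs : ∑ s0 ∈ Sstar,
          ((∑ m, if m0 = m jstar then pM m * mJointAt A μ W m x i (jstar, s0) else 0)
            * (b m0 * W (x i) m0 (jstar, s0)))
        = ∑ m, ∑ s0 ∈ Sstar, (if m0 = m jstar
            then pM m * mJointAt A μ W m x i (jstar, s0) * (b m0 * W (x i) m0 (jstar, s0))
            else 0) := by
      rw [Finset.sum_comm]
      refine Finset.sum_congr rfl fun s0 _ => ?_
      rw [Finset.sum_mul]
      refine Finset.sum_congr rfl fun m _ => ?_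
      by_cases hm : m0 = m jstar <;> simp [hm]
    rw [hlhs]
    refine Finset.sum_congr rfl fun m _ => ?_
    by_cases hm : m0 = m jstar
    · have hseq : pM m * mSeqPm A μ W m x
          = ∑ s0 ∈ Sstar, pM m * (mJointAt A μ W m x i (jstar, s0)
              * W (x i) (m jstar) (jstar, s0)) := by
        rw [← mJointAt_W_sum A μ W m x i, Finset.mul_sum]
        rw [← sum_Hstar jstar Sstar
          (fun g => pM m * (mJointAt A μ W m x i g * W (x i) (m g.1) g))]
        refine Finset.sum_congr rfl fun g _ => ?_
        by_cases hg : g.1 = jstar ∧ g.2 ∈ Sstar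
        · rw [if_pos hg]
        · rw [if_neg hg, ← mul_assoc, hvan g hg m, zero_mul]
      have hm' : m jstar = m0 := hm.symm
      rw [if_pos hm', hseq, Finset.mul_sum]
      refine (Finset.sum_congr rfl fun s0 _ => ?_).symm
      rw [if_pos hm, hm]
      ring
    · have hm' : ¬(m jstar = m0) := fun h => hm h.symm
      rw [if_neg hm']
      exact Finset.sum_eq_zero fun s0 _ => if_neg hm
  -- the argmax set
  set F : Finset (Fin T) := Finset.univ.filter (fun i : Fin T => ∀ i' : Fin T,
      qq ⬝ᵥ (KK.mulVec (mGtok pM A μ W x i') + ββ i')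
        ≤ qq ⬝ᵥ (KK.mulVec (mGtok pM A μ W x i) + ββ i)) with hF
  obtain ⟨i0, hi0⟩ := hsupp
  have hi0' : ∀ g : Fin N × S, ¬(g.1 = jstar ∧ g.2 ∈ Sstar) →
      ∑ m, pM m * mJointAt A μ W m x i0 g = 0 := by
    intro g hg
    have h1 := hi0 g hg
    unfold mPostH at h1
    rcases div_eq_zero_iff.mp h1 with h | h
    · exact h
    · exact absurd h (ne_of_gt (hZpos i0))
  have hi0F : i0 ∈ F := by
    rw [hF, Finset.mem_filter]
    refine ⟨Finset.mem_univ i0, fun i' => ?_⟩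
    rw [hscore_one i0 hi0']
    exact hscore_le i'
  have hFvan : ∀ i ∈ F, ∀ g : Fin N × S, ¬(g.1 = jstar ∧ g.2 ∈ Sstar) →
      ∀ m, pM m * mJointAt A μ W m x i g = 0 := by
    intro i hiF
    refine hone_van i ?_
    rw [hF, Finset.mem_filter] at hiF
    have h1 := hiF.2 i0
    rw [hscore_one i0 hi0'] at h1
    exact le_antisymm (hscore_le i) h1
  -- final assembly
  have hLHS : ∑ m0, b m0 * mMemPost pM A μ W jstar x m0
      = (∑ m0, b m0 * ∑ m, (if m jstar = m0 then pM m * mSeqPm A μ W m x else 0))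
        / mSeqP pM A μ W x := by
    unfold mMemPost
    simp_rw [← mul_div_assoc]
    rw [← Finset.sum_div]
  rw [hLHS, le_div_iff₀ hP, zero_mul]
  have hsumF : ∑ i ∈ F, (∑ p : 𝕄 × (Fin N × S),
        b p.1 * (VV.mulVec (mGtok pM A μ W x i) p * W (x i) p.1 p.2))
      = (∑ i ∈ F, (mZ pM A μ W x i)⁻¹) *
          (∑ m0, b m0 * ∑ m, (if m jstar = m0 then pM m * mSeqPm A μ W m x else 0)) := by
    rw [Finset.sum_mul]
    exact Finset.sum_congr rfl fun i hiF => hvalue i (hFvan i hiF)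
  have hk : 0 < ((F.card : ℝ))⁻¹ * ∑ i ∈ F, (mZ pM A μ W x i)⁻¹ := by
    have hc : 0 < (F.card : ℝ) :=
      Nat.cast_pos.mpr (Finset.card_pos.mpr ⟨i0, hi0F⟩)
    exact mul_pos (inv_pos.mpr hc)
      (Finset.sum_pos (fun i _ => inv_pos.mpr (hZpos i)) ⟨i0, hi0F⟩)
  show (0 ≤ ∑ m0, b m0 * ∑ m, (if m jstar = m0 then pM m * mSeqPm A μ W m x else 0)) ↔
    0 ≤ ((F.card : ℝ))⁻¹ * ∑ i ∈ F, ∑ p : 𝕄 × (Fin N × S),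
      b p.1 * (VV.mulVec (mGtok pM A μ W x i) p * W (x i) p.1 p.2)
  rw [hsumF, ← mul_assoc, mul_nonneg_iff_of_pos_left hk]

end
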